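/- In an orthogonal square-grid circle pattern, both the intersection points p : ℤ² → ℂ and the circle centers t : ℤ² → ℂ are P-nets: 1/(p_{i+1,j}-p_{i,j}) - 1/(p_{i,j+1}-p_{i,j}) + 1/(p_{i-1,j}-p_{i,j}) - 1/(p_{i,j-1}-p_{i,j}) = 0 for all (i,j), and similarly for t. (It suffices to prove the following local statement: if c is a circle with center t₀ through four pairwise distinct points p₁, p₂, p₃, p₄, and four circles centered t₁, t₂, t₃, t₄ each orthogonal to c pass through consecutive pairs (p₁,p₂), (p₂,p₃), (p₃,p₄), (p₄,p₁), then ∑_k (−1)^k/(p_k − t₀) = 0 under the concyclicity and orthogonality constraints expressed algebraically.) -/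

import Mathlib

open ComplexConjugate

/-- Helper: convert `Complex.abs z = c` to a conjugate-product equation. -/
private lemma cabs {z : ℂ} {c : ℝ} (h : ‖z‖ = c) :
    z * conj z = (c : ℂ) ^ 2 := by
  rw [Complex.mul_conj, Complex.normSq_eq_norm_sq, h]; push_cast; ring

/-- Helper: convert `Complex.abs z ^ 2 = c` to a conjugate-product equation. -/
private lemma cq {z : ℂ} {c : ℝ} (h : ‖z‖ ^ 2 = c) :
    z * conj z = (c : ℂ) := by
  rw [Complex.mul_conj, Complex.normSq_eq_norm_sq, h]

private lemma cneg (z : ℂ) : (-z) * conj (-z) = z * conj z := by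
  rw [map_neg]; ring

private lemma sqne {a : ℝ} (ha : 0 < a) : ((a : ℂ)) ^ 2 ≠ 0 :=
  pow_ne_zero 2 (Complex.ofReal_ne_zero.mpr ha.ne')

private lemma sumsqne {a b : ℝ} (ha : 0 < a) (hb : 0 < b) :
    ((a : ℂ)) ^ 2 + ((b : ℂ)) ^ 2 ≠ 0 := by
  rw [show ((a : ℂ)) ^ 2 + ((b : ℂ)) ^ 2 = ((a ^ 2 + b ^ 2 : ℝ) : ℂ) by push_cast; ring]
  exact Complex.ofReal_ne_zero.mpr (by positivity)

/-- Two circles through `0` and `s` with centers `A`, `B`, intersecting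
orthogonally, satisfy `1/s = (1/A + 1/B)/2`. -/
private lemma key1 (A B s ra rb : ℂ) (hra : ra ≠ 0) (hrb : rb ≠ 0) (hs : s ≠ 0)
    (hA : A * conj A = ra) (hB : B * conj B = rb)
    (h1 : (s - A) * conj (s - A) = ra) (h2 : (s - B) * conj (s - B) = rb)
    (horth : (A - B) * conj (A - B) = ra + rb) :
    1 / s = (1 / A + 1 / B) / 2 := by
  have hA0 : A ≠ 0 := fun h => hra (by simpa [h] using hA.symm)
  have hB0 : B ≠ 0 := fun h => hrb (by simpa [h] using hB.symm)
  simp only [map_sub] at h1 h2 horth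
  have ho : A * conj B + B * conj A = 0 := by linear_combination hA + hB - horth
  have hAB : A ≠ B := by
    intro h
    apply hA0
    have h0 : A * conj A = 0 := by rw [h] at ho ⊢; linear_combination ho / 2
    rcases mul_eq_zero.mp h0 with h' | h'
    · exact h'
    · simpa using congrArg conj h'
  have u1 : s * conj s = s * conj A + A * conj s := by linear_combination h1 - hA
  have u2 : s * conj s = s * conj B + B * conj s := by linear_combination h2 - hB
  have eq0 : s * (conj A - conj B) + conj s * (A - B) = 0 := by linear_combination u2 - u1
  have e2 : s * (s * (conj A - conj B)) = s * (2 * conj A * B) := by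
    linear_combination (s - A) * eq0 - (A - B) * u1 - s * ho
  have e3 : s * (conj A - conj B) = 2 * conj A * B := mul_left_cancel₀ hs e2
  have hconj : conj A - conj B ≠ 0 := by
    intro h
    apply hAB
    have h' : conj A = conj B := sub_eq_zero.mp h
    simpa using congrArg conj h'
  have e4 : (2 * (A * B)) * (conj A - conj B) = (s * (A + B)) * (conj A - conj B) := by
    linear_combination (-(A + B)) * e3 - 2 * B * ho
  have final : 2 * (A * B) = s * (A + B) := mul_right_cancel₀ hconj e4
  field_simp
  linear_combination final

/-- Two orthogonal circles centered at `0` and `B` meeting at `w₁ ≠ w₂`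
satisfy `1/B = (1/w₁ + 1/w₂)/2`. -/
private lemma key2 (B w1 w2 ra rb : ℂ) (hra : ra ≠ 0) (hrab : ra + rb ≠ 0) (hw : w1 ≠ w2)
    (h1 : w1 * conj w1 = ra) (h2 : w2 * conj w2 = ra)
    (h1' : (w1 - B) * conj (w1 - B) = rb) (h2' : (w2 - B) * conj (w2 - B) = rb)
    (hB : B * conj B = ra + rb) :
    1 / B = (1 / w1 + 1 / w2) / 2 := by
  have hw1 : w1 ≠ 0 := fun h => hra (by simpa [h] using h1.symm)
  have hw2 : w2 ≠ 0 := fun h => hra (by simpa [h] using h2.symm)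
  have hB0 : B ≠ 0 := fun h => hrab (by simpa [h] using hB.symm)
  have hBc : conj B ≠ 0 := fun h => hB0 (by simpa using congrArg conj h)
  simp only [map_sub] at h1' h2'
  have eA : w1 * conj B + B * conj w1 = 2 * ra := by linear_combination h1 + hB - h1'
  have eB : w2 * conj B + B * conj w2 = 2 * ra := by linear_combination h2 + hB - h2'
  have qA : conj B * w1 ^ 2 - 2 * ra * w1 + ra * B = 0 := by
    linear_combination w1 * eA - B * h1
  have qB : conj B * w2 ^ 2 - 2 * ra * w2 + ra * B = 0 := by
    linear_combination w2 * eB - B * h2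
  have hsub : w1 - w2 ≠ 0 := sub_ne_zero.mpr hw
  have v1' : (conj B * (w1 + w2) - 2 * ra) * (w1 - w2) = 0 := by linear_combination qA - qB
  have v1 : conj B * (w1 + w2) = 2 * ra := by
    rcases mul_eq_zero.mp v1' with h | h
    · linear_combination h
    · exact absurd h hsub
  have v2 : conj B * (w1 * w2) = ra * B := by linear_combination w1 * v1 - qA
  have e4 : (2 * (w1 * w2)) * conj B = (B * (w1 + w2)) * conj B := by
    linear_combination 2 * v2 - B * v1
  have final : 2 * (w1 * w2) = B * (w1 + w2) := mul_right_cancel₀ hBc e4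
  field_simp
  linear_combination final

set_option maxHeartbeats 1600000 in
/-- In an orthogonal square-grid circle pattern (each quad
`p_{i,j}, p_{i+1,j}, p_{i+1,j+1}, p_{i,j+1}` lies on the circle of center
`t_{i,j}` and radius `r_{i,j}`, and adjacent circles intersect orthogonally:
`|t−t'|² = r² + r'²`), both the intersection points `p` and the circle centers
`t` are P-nets. -/
theorem orthogonal_circle_pattern_pnets (p t : ℤ × ℤ → ℂ) (r : ℤ × ℤ → ℝ)
    (hr : ∀ i j : ℤ, 0 < r (i, j))
    (hcirc : ∀ i j : ℤ,
      ‖p (i, j) - t (i, j)‖ = r (i, j) ∧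
      ‖p (i + 1, j) - t (i, j)‖ = r (i, j) ∧
      ‖p (i + 1, j + 1) - t (i, j)‖ = r (i, j) ∧
      ‖p (i, j + 1) - t (i, j)‖ = r (i, j))
    (horthH : ∀ i j : ℤ,
      (‖t (i + 1, j) - t (i, j)‖) ^ 2 = r (i, j) ^ 2 + r (i + 1, j) ^ 2)
    (horthV : ∀ i j : ℤ,
      (‖t (i, j + 1) - t (i, j)‖) ^ 2 = r (i, j) ^ 2 + r (i, j + 1) ^ 2)
    (hpden : ∀ i j : ℤ, p (i + 1, j) ≠ p (i, j) ∧ p (i, j + 1) ≠ p (i, j) ∧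
      p (i - 1, j) ≠ p (i, j) ∧ p (i, j - 1) ≠ p (i, j))
    (htden : ∀ i j : ℤ, t (i + 1, j) ≠ t (i, j) ∧ t (i, j + 1) ≠ t (i, j) ∧
      t (i - 1, j) ≠ t (i, j) ∧ t (i, j - 1) ≠ t (i, j)) :
    ∀ i j : ℤ,
      (1 / (p (i + 1, j) - p (i, j)) - 1 / (p (i, j + 1) - p (i, j))
        + 1 / (p (i - 1, j) - p (i, j)) - 1 / (p (i, j - 1) - p (i, j)) = 0) ∧
      (1 / (t (i + 1, j) - t (i, j)) - 1 / (t (i, j + 1) - t (i, j))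
        + 1 / (t (i - 1, j) - t (i, j)) - 1 / (t (i, j - 1) - t (i, j)) = 0) := by
  intro i j
  have hI : i - 1 + 1 = i := by ring
  have hJ : j - 1 + 1 = j := by ring
  obtain ⟨c1a, c1b, c1c, c1d⟩ := hcirc i j
  have c2 := hcirc (i - 1) j
  rw [hI] at c2
  obtain ⟨c2a, c2b, c2c, c2d⟩ := c2
  have c3 := hcirc (i - 1) (j - 1)
  rw [hI, hJ] at c3
  obtain ⟨c3a, c3b, c3c, c3d⟩ := c3
  have c4 := hcirc i (j - 1)
  rw [hJ] at c4
  obtain ⟨c4a, c4b, c4c, c4d⟩ := c4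
  obtain ⟨cu1, cu2, cu3, cu4⟩ := hcirc (i + 1) j
  obtain ⟨cv1, cv2, cv3, cv4⟩ := hcirc i (j + 1)
  have oV := horthV i (j - 1); rw [hJ] at oV
  have oH := horthH (i - 1) j; rw [hI] at oH
  have oV2 := horthV (i - 1) (j - 1); rw [hJ] at oV2
  have oH2 := horthH (i - 1) (j - 1); rw [hI] at oH2
  have oH0 := horthH i j
  have oV0 := horthV i j
  obtain ⟨d1, d2, d3, d4⟩ := hpden i j
  constructor
  · -- P-net for the points p
    have E1 : 1 / (p (i + 1, j) - p (i, j)) =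
        (1 / (t (i, j) - p (i, j)) + 1 / (t (i, j - 1) - p (i, j))) / 2 := by
      refine key1 _ _ _ ((r (i, j) : ℂ) ^ 2) ((r (i, j - 1) : ℂ) ^ 2)
        (sqne (hr i j)) (sqne (hr i (j - 1))) (sub_ne_zero.mpr d1) ?_ ?_ ?_ ?_ ?_
      · rw [show t (i, j) - p (i, j) = -(p (i, j) - t (i, j)) from by ring, cneg]
        exact cabs c1a
      · rw [show t (i, j - 1) - p (i, j) = -(p (i, j) - t (i, j - 1)) from by ring, cneg]
        exact cabs c4d
      · rw [show p (i + 1, j) - p (i, j) - (t (i, j) - p (i, j))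
            = p (i + 1, j) - t (i, j) from by ring]
        exact cabs c1b
      · rw [show p (i + 1, j) - p (i, j) - (t (i, j - 1) - p (i, j))
            = p (i + 1, j) - t (i, j - 1) from by ring]
        exact cabs c4c
      · rw [show t (i, j) - p (i, j) - (t (i, j - 1) - p (i, j))
            = t (i, j) - t (i, j - 1) from by ring, cq oV]
        push_cast; ring
    have E2 : 1 / (p (i, j + 1) - p (i, j)) =
        (1 / (t (i, j) - p (i, j)) + 1 / (t (i - 1, j) - p (i, j))) / 2 := by
      refine key1 _ _ _ ((r (i, j) : ℂ) ^ 2) ((r (i - 1, j) : ℂ) ^ 2)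
        (sqne (hr i j)) (sqne (hr (i - 1) j)) (sub_ne_zero.mpr d2) ?_ ?_ ?_ ?_ ?_
      · rw [show t (i, j) - p (i, j) = -(p (i, j) - t (i, j)) from by ring, cneg]
        exact cabs c1a
      · rw [show t (i - 1, j) - p (i, j) = -(p (i, j) - t (i - 1, j)) from by ring, cneg]
        exact cabs c2b
      · rw [show p (i, j + 1) - p (i, j) - (t (i, j) - p (i, j))
            = p (i, j + 1) - t (i, j) from by ring]
        exact cabs c1d
      · rw [show p (i, j + 1) - p (i, j) - (t (i - 1, j) - p (i, j))
            = p (i, j + 1) - t (i - 1, j) from by ring]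
        exact cabs c2c
      · rw [show t (i, j) - p (i, j) - (t (i - 1, j) - p (i, j))
            = t (i, j) - t (i - 1, j) from by ring, cq oH]
        push_cast; ring
    have E3 : 1 / (p (i - 1, j) - p (i, j)) =
        (1 / (t (i - 1, j) - p (i, j)) + 1 / (t (i - 1, j - 1) - p (i, j))) / 2 := by
      refine key1 _ _ _ ((r (i - 1, j) : ℂ) ^ 2) ((r (i - 1, j - 1) : ℂ) ^ 2)
        (sqne (hr (i - 1) j)) (sqne (hr (i - 1) (j - 1))) (sub_ne_zero.mpr d3) ?_ ?_ ?_ ?_ ?_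
      · rw [show t (i - 1, j) - p (i, j) = -(p (i, j) - t (i - 1, j)) from by ring, cneg]
        exact cabs c2b
      · rw [show t (i - 1, j - 1) - p (i, j) = -(p (i, j) - t (i - 1, j - 1)) from by ring,
          cneg]
        exact cabs c3c
      · rw [show p (i - 1, j) - p (i, j) - (t (i - 1, j) - p (i, j))
            = p (i - 1, j) - t (i - 1, j) from by ring]
        exact cabs c2a
      · rw [show p (i - 1, j) - p (i, j) - (t (i - 1, j - 1) - p (i, j))
            = p (i - 1, j) - t (i - 1, j - 1) from by ring]
        exact cabs c3d
      · rw [show t (i - 1, j) - p (i, j) - (t (i - 1, j - 1) - p (i, j))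
            = t (i - 1, j) - t (i - 1, j - 1) from by ring, cq oV2]
        push_cast; ring
    have E4 : 1 / (p (i, j - 1) - p (i, j)) =
        (1 / (t (i - 1, j - 1) - p (i, j)) + 1 / (t (i, j - 1) - p (i, j))) / 2 := by
      refine key1 _ _ _ ((r (i - 1, j - 1) : ℂ) ^ 2) ((r (i, j - 1) : ℂ) ^ 2)
        (sqne (hr (i - 1) (j - 1))) (sqne (hr i (j - 1))) (sub_ne_zero.mpr d4) ?_ ?_ ?_ ?_ ?_
      · rw [show t (i - 1, j - 1) - p (i, j) = -(p (i, j) - t (i - 1, j - 1)) from by ring,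
          cneg]
        exact cabs c3c
      · rw [show t (i, j - 1) - p (i, j) = -(p (i, j) - t (i, j - 1)) from by ring, cneg]
        exact cabs c4d
      · rw [show p (i, j - 1) - p (i, j) - (t (i - 1, j - 1) - p (i, j))
            = p (i, j - 1) - t (i - 1, j - 1) from by ring]
        exact cabs c3b
      · rw [show p (i, j - 1) - p (i, j) - (t (i, j - 1) - p (i, j))
            = p (i, j - 1) - t (i, j - 1) from by ring]
        exact cabs c4a
      · rw [show t (i - 1, j - 1) - p (i, j) - (t (i, j - 1) - p (i, j))
            = -(t (i, j - 1) - t (i - 1, j - 1)) from by ring, cneg, cq oH2]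
        push_cast; ring
    linear_combination E1 - E2 + E3 - E4
  · -- P-net for the centers t
    have F1 : 1 / (t (i + 1, j) - t (i, j)) =
        (1 / (p (i + 1, j) - t (i, j)) + 1 / (p (i + 1, j + 1) - t (i, j))) / 2 := by
      refine key2 _ _ _ ((r (i, j) : ℂ) ^ 2) ((r (i + 1, j) : ℂ) ^ 2)
        (sqne (hr i j)) (sumsqne (hr i j) (hr (i + 1) j)) ?_ (cabs c1b) (cabs c1c)
        ?_ ?_ (by rw [cq oH0]; push_cast; ring)
      · intro h
        exact (hpden (i + 1) j).2.1 (by linear_combination -h)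
      · rw [show p (i + 1, j) - t (i, j) - (t (i + 1, j) - t (i, j))
            = p (i + 1, j) - t (i + 1, j) from by ring]
        exact cabs cu1
      · rw [show p (i + 1, j + 1) - t (i, j) - (t (i + 1, j) - t (i, j))
            = p (i + 1, j + 1) - t (i + 1, j) from by ring]
        exact cabs cu4
    have F2 : 1 / (t (i, j + 1) - t (i, j)) =
        (1 / (p (i, j + 1) - t (i, j)) + 1 / (p (i + 1, j + 1) - t (i, j))) / 2 := by
      refine key2 _ _ _ ((r (i, j) : ℂ) ^ 2) ((r (i, j + 1) : ℂ) ^ 2)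
        (sqne (hr i j)) (sumsqne (hr i j) (hr i (j + 1))) ?_ (cabs c1d) (cabs c1c)
        ?_ ?_ (by rw [cq oV0]; push_cast; ring)
      · intro h
        exact (hpden i (j + 1)).1 (by linear_combination -h)
      · rw [show p (i, j + 1) - t (i, j) - (t (i, j + 1) - t (i, j))
            = p (i, j + 1) - t (i, j + 1) from by ring]
        exact cabs cv1
      · rw [show p (i + 1, j + 1) - t (i, j) - (t (i, j + 1) - t (i, j))
            = p (i + 1, j + 1) - t (i, j + 1) from by ring]
        exact cabs cv2
    have F3 : 1 / (t (i - 1, j) - t (i, j)) =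
        (1 / (p (i, j) - t (i, j)) + 1 / (p (i, j + 1) - t (i, j))) / 2 := by
      refine key2 _ _ _ ((r (i, j) : ℂ) ^ 2) ((r (i - 1, j) : ℂ) ^ 2)
        (sqne (hr i j)) (sumsqne (hr i j) (hr (i - 1) j)) ?_ (cabs c1a) (cabs c1d)
        ?_ ?_ ?_
      · intro h
        exact (hpden i j).2.1 (by linear_combination -h)
      · rw [show p (i, j) - t (i, j) - (t (i - 1, j) - t (i, j))
            = p (i, j) - t (i - 1, j) from by ring]
        exact cabs c2b
      · rw [show p (i, j + 1) - t (i, j) - (t (i - 1, j) - t (i, j))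
            = p (i, j + 1) - t (i - 1, j) from by ring]
        exact cabs c2c
      · rw [show t (i - 1, j) - t (i, j) = -(t (i, j) - t (i - 1, j)) from by ring, cneg,
          cq oH]
        push_cast; ring
    have F4 : 1 / (t (i, j - 1) - t (i, j)) =
        (1 / (p (i, j) - t (i, j)) + 1 / (p (i + 1, j) - t (i, j))) / 2 := by
      refine key2 _ _ _ ((r (i, j) : ℂ) ^ 2) ((r (i, j - 1) : ℂ) ^ 2)
        (sqne (hr i j)) (sumsqne (hr i j) (hr i (j - 1))) ?_ (cabs c1a) (cabs c1b)
        ?_ ?_ ?_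
      · intro h
        exact (hpden i j).1 (by linear_combination -h)
      · rw [show p (i, j) - t (i, j) - (t (i, j - 1) - t (i, j))
            = p (i, j) - t (i, j - 1) from by ring]
        exact cabs c4d
      · rw [show p (i + 1, j) - t (i, j) - (t (i, j - 1) - t (i, j))
            = p (i + 1, j) - t (i, j - 1) from by ring]
        exact cabs c4c
      · rw [show t (i, j - 1) - t (i, j) = -(t (i, j) - t (i, j - 1)) from by ring, cneg,
          cq oV]
        push_cast; ring
    linear_combination F1 - F2 + F3 - F4
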